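/- Let 0 < h ≤ 1, 0 < p ≤ 1 and c₁, c₂, c₃, c₄ ≥ 0. Let u, ũ, u_h : ℝ² → ℝ be differentiable and suppose: (i) ‖u − ũ‖_E ≤ c₁ h; (ii) ‖ũ − u_h‖_Ẽ ≤ c₂ h^p; (iii) |‖ũ − u_h‖_E² − ‖ũ − u_h‖_Ẽ²| ≤ c₃ h²; (iv) the Galerkin orthogonality identity ‖ũ − u_h‖_Ẽ² = ‖ũ‖_Ẽ² − ‖u_h‖_Ẽ²; (v) |‖u‖_E² − ‖ũ‖_Ẽ²| ≤ c₄ h². Then |‖u‖_E² − ‖u_h‖_Ẽ²| ≤ ‖u − u_h‖_E² + C h^{1+p}, where C := 3c₁² + 2c₁c₂ + 2c₁√c₃ + c₃ + c₄. -/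

import Mathlib

open MeasureTheory

variable {α : Type*} [MeasurableSpace α] {μ : Measure α}

lemma my_int_mul (f g : α → ℝ) (hf : AEStronglyMeasurable f μ) (hg : AEStronglyMeasurable g μ)
    (hf2 : Integrable (fun x => f x ^ 2) μ) (hg2 : Integrable (fun x => g x ^ 2) μ) :
    Integrable (fun x => f x * g x) μ := by
  refine (hf2.add hg2).mono (hf.mul hg) (ae_of_all _ fun x => ?_)
  simp only [Pi.add_apply]
  rw [Real.norm_eq_abs, Real.norm_eq_abs, abs_mul,
    abs_of_nonneg (by positivity : (0:ℝ) ≤ f x ^ 2 + g x ^ 2)]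
  nlinarith [sq_abs (f x), sq_abs (g x), sq_nonneg (|f x| - |g x|), abs_nonneg (f x),
    abs_nonneg (g x)]

lemma my_cs (f g : α → ℝ) (hf : AEStronglyMeasurable f μ) (hg : AEStronglyMeasurable g μ)
    (hf2 : Integrable (fun x => f x ^ 2) μ) (hg2 : Integrable (fun x => g x ^ 2) μ) :
    ∫ x, f x * g x ∂μ ≤
      Real.sqrt (∫ x, f x ^ 2 ∂μ) * Real.sqrt (∫ x, g x ^ 2 ∂μ) := by
  set I := ∫ x, f x ^ 2 ∂μ with hI
  set J := ∫ x, g x ^ 2 ∂μ with hJ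
  set K := ∫ x, f x * g x ∂μ with hK
  have hI0 : 0 ≤ I := integral_nonneg fun x => sq_nonneg _
  have hJ0 : 0 ≤ J := integral_nonneg fun x => sq_nonneg _
  have hfg : Integrable (fun x => f x * g x) μ := my_int_mul f g hf hg hf2 hg2
  have key : ∀ t : ℝ, 0 ≤ t ^ 2 * I - 2 * t * K + J := by
    intro t
    have h0 : 0 ≤ ∫ x, (t * f x - g x) ^ 2 ∂μ := integral_nonneg fun x => sq_nonneg _
    have hexp : (fun x => (t * f x - g x) ^ 2)
        = fun x => (t ^ 2 * f x ^ 2 - 2 * t * (f x * g x)) + g x ^ 2 :=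
      funext fun x => by ring
    have hA : Integrable (fun x => t ^ 2 * f x ^ 2 - 2 * t * (f x * g x)) μ :=
      (hf2.const_mul _).sub (hfg.const_mul _)
    rw [hexp, integral_add hA hg2,
      integral_sub (hf2.const_mul _) (hfg.const_mul _), integral_const_mul,
      integral_const_mul] at h0
    linarith
  have hK2 : K ^ 2 ≤ I * J := by
    rcases eq_or_lt_of_le hI0 with hIz | hIp
    · have hKz : K = 0 := by
        by_contra hKne
        have h1 := key ((J + 1) / (2 * K))
        rw [← hIz] at h1
        have h2 : 2 * ((J + 1) / (2 * K)) * K = J + 1 := by field_simp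
        nlinarith
      rw [hKz, ← hIz]; nlinarith
    · have h1 := key (K / I)
      have h2 : (K / I) ^ 2 * I - 2 * (K / I) * K + J = J - K ^ 2 / I := by
        field_simp; ring
      rw [h2] at h1
      have h3 : K ^ 2 / I ≤ J := by linarith
      have h4 := (div_le_iff₀ hIp).mp h3
      linarith [h4, mul_comm J I, (by ring : J * I = I * J)]
  calc K ≤ |K| := le_abs_self K
    _ = Real.sqrt (K ^ 2) := (Real.sqrt_sq_eq_abs K).symm
    _ ≤ Real.sqrt (I * J) := Real.sqrt_le_sqrt hK2
    _ = Real.sqrt I * Real.sqrt J := Real.sqrt_mul hI0 J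

lemma my_tri (Ω : Set (EuclideanSpace ℝ (Fin 2))) (hΩ : MeasurableSet Ω)
    (a : EuclideanSpace ℝ (Fin 2) → ℝ) (ha : ∀ x ∈ Ω, 0 ≤ a x)
    (φ ψ χ : EuclideanSpace ℝ (Fin 2) → EuclideanSpace ℝ (Fin 2))
    (hn : ∀ x ∈ Ω, ‖χ x‖ ≤ ‖φ x‖ + ‖ψ x‖)
    (hφ : IntegrableOn (fun x => a x * ‖φ x‖ ^ 2) Ω)
    (hψ : IntegrableOn (fun x => a x * ‖ψ x‖ ^ 2) Ω)
    (hχ : IntegrableOn (fun x => a x * ‖χ x‖ ^ 2) Ω) :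
    Real.sqrt (∫ x in Ω, a x * ‖χ x‖ ^ 2) ≤
      Real.sqrt (∫ x in Ω, a x * ‖φ x‖ ^ 2) + Real.sqrt (∫ x in Ω, a x * ‖ψ x‖ ^ 2) := by
  set μ := volume.restrict Ω with hμ
  set F := fun x => Real.sqrt (a x * ‖φ x‖ ^ 2) with hF
  set G := fun x => Real.sqrt (a x * ‖ψ x‖ ^ 2) with hG
  have hFm : AEStronglyMeasurable F μ :=
    Real.continuous_sqrt.comp_aestronglyMeasurable hφ.aestronglyMeasurable
  have hGm : AEStronglyMeasurable G μ :=
    Real.continuous_sqrt.comp_aestronglyMeasurable hψ.aestronglyMeasurable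
  have hF2 : (fun x => a x * ‖φ x‖ ^ 2) =ᵐ[μ] fun x => F x ^ 2 :=
    (ae_restrict_iff' hΩ).2 (ae_of_all _ fun x hx =>
      (Real.sq_sqrt (mul_nonneg (ha x hx) (sq_nonneg _))).symm)
  have hG2 : (fun x => a x * ‖ψ x‖ ^ 2) =ᵐ[μ] fun x => G x ^ 2 :=
    (ae_restrict_iff' hΩ).2 (ae_of_all _ fun x hx =>
      (Real.sq_sqrt (mul_nonneg (ha x hx) (sq_nonneg _))).symm)
  have hF2i : Integrable (fun x => F x ^ 2) μ := hφ.congr hF2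
  have hG2i : Integrable (fun x => G x ^ 2) μ := hψ.congr hG2
  have hFGi : Integrable (fun x => F x * G x) μ := my_int_mul F G hFm hGm hF2i hG2i
  have hsumi : Integrable (fun x => (F x + G x) ^ 2) μ := by
    have he : (fun x => (F x + G x) ^ 2)
        = fun x => (F x ^ 2 + 2 * (F x * G x)) + G x ^ 2 := funext fun x => by ring
    rw [he]; exact (hF2i.add (hFGi.const_mul 2)).add hG2i
  have hmono : (fun x => a x * ‖χ x‖ ^ 2) ≤ᵐ[μ] fun x => (F x + G x) ^ 2 := by
    refine (ae_restrict_iff' hΩ).2 (ae_of_all _ fun x hx => ?_)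
    have ha' := ha x hx
    have hFx : F x = Real.sqrt (a x) * ‖φ x‖ := by
      simp only [hF]; rw [Real.sqrt_mul ha', Real.sqrt_sq (norm_nonneg _)]
    have hGx : G x = Real.sqrt (a x) * ‖ψ x‖ := by
      simp only [hG]; rw [Real.sqrt_mul ha', Real.sqrt_sq (norm_nonneg _)]
    have hs : Real.sqrt (a x) ^ 2 = a x := Real.sq_sqrt ha'
    have h1 : a x * ‖χ x‖ ^ 2 ≤ a x * (‖φ x‖ + ‖ψ x‖) ^ 2 :=
      mul_le_mul_of_nonneg_left
        (pow_le_pow_left₀ (norm_nonneg _) (hn x hx) 2) ha'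
    calc a x * ‖χ x‖ ^ 2 ≤ a x * (‖φ x‖ + ‖ψ x‖) ^ 2 := h1
      _ = (F x + G x) ^ 2 := by rw [hFx, hGx, ← mul_add, mul_pow, hs]
  have hIF0 : 0 ≤ ∫ x, F x ^ 2 ∂μ := integral_nonneg fun x => sq_nonneg _
  have hIG0 : 0 ≤ ∫ x, G x ^ 2 ∂μ := integral_nonneg fun x => sq_nonneg _
  have hcs := my_cs F G hFm hGm hF2i hG2i
  have step1 : ∫ x, a x * ‖χ x‖ ^ 2 ∂μ ≤ ∫ x, (F x + G x) ^ 2 ∂μ :=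
    integral_mono_ae hχ hsumi hmono
  have step2 : ∫ x, (F x + G x) ^ 2 ∂μ
      ≤ (Real.sqrt (∫ x, F x ^ 2 ∂μ) + Real.sqrt (∫ x, G x ^ 2 ∂μ)) ^ 2 := by
    have he : (fun x => (F x + G x) ^ 2)
        = fun x => (F x ^ 2 + 2 * (F x * G x)) + G x ^ 2 := funext fun x => by ring
    have hAi : Integrable (fun x => F x ^ 2 + 2 * (F x * G x)) μ := hF2i.add (hFGi.const_mul 2)
    rw [he, integral_add hAi hG2i, integral_add hF2i (hFGi.const_mul 2), integral_const_mul]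
    have e1 := Real.sq_sqrt hIF0
    have e2 := Real.sq_sqrt hIG0
    nlinarith [hcs]
  have hrw1 : (∫ x in Ω, a x * ‖φ x‖ ^ 2) = ∫ x, F x ^ 2 ∂μ := integral_congr_ae hF2
  have hrw2 : (∫ x in Ω, a x * ‖ψ x‖ ^ 2) = ∫ x, G x ^ 2 ∂μ := integral_congr_ae hG2
  rw [hrw1, hrw2]
  calc Real.sqrt (∫ x in Ω, a x * ‖χ x‖ ^ 2)
      ≤ Real.sqrt ((Real.sqrt (∫ x, F x ^ 2 ∂μ) + Real.sqrt (∫ x, G x ^ 2 ∂μ)) ^ 2) :=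
        Real.sqrt_le_sqrt (step1.trans step2)
    _ = Real.sqrt (∫ x, F x ^ 2 ∂μ) + Real.sqrt (∫ x, G x ^ 2 ∂μ) :=
        Real.sqrt_sq (by positivity)

lemma my_grad_sub (f g : EuclideanSpace ℝ (Fin 2) → ℝ)
    (hf : Differentiable ℝ f) (hg : Differentiable ℝ g) (x : EuclideanSpace ℝ (Fin 2)) :
    gradient (f - g) x = gradient f x - gradient g x := by
  unfold gradient
  rw [show f - g = fun y => f y - g y from rfl, fderiv_fun_sub (hf x) (hg x), map_sub]

/-- The energy norm `‖v‖ = (∫_Ω a ‖∇v‖² dx)^{1/2}` associated with a coefficient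
function `a` on the set `Ω`. -/
noncomputable def energyNorm (Ω : Set (EuclideanSpace ℝ (Fin 2)))
    (a : EuclideanSpace ℝ (Fin 2) → ℝ) (v : EuclideanSpace ℝ (Fin 2) → ℝ) : ℝ :=
  Real.sqrt (∫ x in Ω, a x * ‖gradient v x‖ ^ 2)

theorem stmt_10
    (Ω : Set (EuclideanSpace ℝ (Fin 2)))
    (hΩmeas : MeasurableSet Ω) (hΩfin : volume Ω < ⊤)
    (a atil : EuclideanSpace ℝ (Fin 2) → ℝ)
    (hameas : Measurable a) (hatilmeas : Measurable atil)
    (ha_nonneg : ∀ x ∈ Ω, 0 ≤ a x) (hatil_nonneg : ∀ x ∈ Ω, 0 ≤ atil x)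
    (h p c₁ c₂ c₃ c₄ : ℝ)
    (hh0 : 0 < h) (hh1 : h ≤ 1) (hp0 : 0 < p) (hp1 : p ≤ 1)
    (hc₁ : 0 ≤ c₁) (hc₂ : 0 ≤ c₂) (hc₃ : 0 ≤ c₃) (hc₄ : 0 ≤ c₄)
    (u util uh : EuclideanSpace ℝ (Fin 2) → ℝ)
    (hu : Differentiable ℝ u) (hutil : Differentiable ℝ util) (huh : Differentiable ℝ uh)
    (hint1 : IntegrableOn (fun x => a x * ‖gradient u x‖ ^ 2) Ω)
    (hint2 : IntegrableOn (fun x => atil x * ‖gradient util x‖ ^ 2) Ω)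
    (hint3 : IntegrableOn (fun x => atil x * ‖gradient uh x‖ ^ 2) Ω)
    (hint4 : IntegrableOn (fun x => a x * ‖gradient (u - util) x‖ ^ 2) Ω)
    (hint5 : IntegrableOn (fun x => a x * ‖gradient (util - uh) x‖ ^ 2) Ω)
    (hint6 : IntegrableOn (fun x => atil x * ‖gradient (util - uh) x‖ ^ 2) Ω)
    (hint7 : IntegrableOn (fun x => a x * ‖gradient (u - uh) x‖ ^ 2) Ω)
    (h1 : energyNorm Ω a (u - util) ≤ c₁ * h)
    (h2 : energyNorm Ω atil (util - uh) ≤ c₂ * h ^ p)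
    (h3 : |energyNorm Ω a (util - uh) ^ 2 - energyNorm Ω atil (util - uh) ^ 2| ≤ c₃ * h ^ 2)
    (h4 : energyNorm Ω atil (util - uh) ^ 2
        = energyNorm Ω atil util ^ 2 - energyNorm Ω atil uh ^ 2)
    (h5 : |energyNorm Ω a u ^ 2 - energyNorm Ω atil util ^ 2| ≤ c₄ * h ^ 2) :
    |energyNorm Ω a u ^ 2 - energyNorm Ω atil uh ^ 2|
      ≤ energyNorm Ω a (u - uh) ^ 2
        + (3 * c₁ ^ 2 + 2 * c₁ * c₂ + 2 * c₁ * Real.sqrt c₃ + c₃ + c₄) * h ^ (1 + p) := by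
  -- abbreviations
  set A := energyNorm Ω a (u - util) with hA
  set B := energyNorm Ω a (util - uh) with hB
  set Bt := energyNorm Ω atil (util - uh) with hBt
  set D := energyNorm Ω a (u - uh) with hD
  set s := Real.sqrt c₃ with hs
  set U := energyNorm Ω a u with hU
  set Ut := energyNorm Ω atil util with hUt
  set Uh := energyNorm Ω atil uh with hUh
  have hs0 : 0 ≤ s := Real.sqrt_nonneg _
  have hs2 : s ^ 2 = c₃ := Real.sq_sqrt hc₃
  have hA0 : 0 ≤ A := Real.sqrt_nonneg _
  have hB0 : 0 ≤ B := Real.sqrt_nonneg _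
  have hBt0 : 0 ≤ Bt := Real.sqrt_nonneg _
  have hD0 : 0 ≤ D := Real.sqrt_nonneg _
  -- triangle inequalities
  have htri1 : B ≤ D + A := by
    refine my_tri Ω hΩmeas a ha_nonneg (fun x => gradient (u - uh) x)
      (fun x => gradient (u - util) x) (fun x => gradient (util - uh) x)
      (fun x hx => ?_) hint7 hint4 hint5
    show ‖gradient (util - uh) x‖ ≤ ‖gradient (u - uh) x‖ + ‖gradient (u - util) x‖
    rw [my_grad_sub util uh hutil huh, my_grad_sub u uh hu huh, my_grad_sub u util hu hutil,
      show gradient util x - gradient uh x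
        = (gradient u x - gradient uh x) - (gradient u x - gradient util x) by abel]
    exact norm_sub_le _ _
  have htri2 : D ≤ A + B := by
    refine my_tri Ω hΩmeas a ha_nonneg (fun x => gradient (u - util) x)
      (fun x => gradient (util - uh) x) (fun x => gradient (u - uh) x)
      (fun x hx => ?_) hint4 hint5 hint7
    show ‖gradient (u - uh) x‖ ≤ ‖gradient (u - util) x‖ + ‖gradient (util - uh) x‖
    rw [my_grad_sub util uh hutil huh, my_grad_sub u uh hu huh, my_grad_sub u util hu hutil,
      show gradient u x - gradient uh x
        = (gradient u x - gradient util x) + (gradient util x - gradient uh x) by abel]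
    exact norm_add_le _ _
  clear_value A B Bt D s U Ut Uh
  -- B ≤ Bt + s * h
  have h3' := abs_le.1 h3
  have hBsq : B ^ 2 ≤ (Bt + s * h) ^ 2 := by
    nlinarith [mul_nonneg (mul_nonneg hBt0 hs0) hh0.le]
  have hBle : B ≤ Bt + s * h := by
    have h' := Real.sqrt_le_sqrt hBsq
    rwa [Real.sqrt_sq hB0, Real.sqrt_sq (add_nonneg hBt0 (mul_nonneg hs0 hh0.le))] at h'
  -- powers of h
  have hhp : h * h ^ p = h ^ (1 + p) := by
    rw [Real.rpow_add hh0, Real.rpow_one]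
  have hp_pos : 0 < h ^ p := Real.rpow_pos_of_pos hh0 p
  have hpow : h ^ 2 ≤ h ^ (1 + p) := by
    have hle : h ^ ((2:ℕ):ℝ) ≤ h ^ (1 + p) :=
      Real.rpow_le_rpow_of_exponent_ge hh0 hh1 (by push_cast; linarith)
    rwa [Real.rpow_natCast] at hle
  have hhp0 : 0 < h ^ (1 + p) := Real.rpow_pos_of_pos hh0 _
  clear hint1 hint2 hint3 hint4 hint5 hint6 hint7 hameas hatilmeas ha_nonneg hatil_nonneg
  clear hu hutil huh hΩmeas hΩfin h3 hA hB hBt hD hU hUt hUh hs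
  -- product bounds
  have hAB : A * B ≤ c₁ * c₂ * (h * h ^ p) + c₁ * s * h ^ 2 := by
    have h1' : A * B ≤ (c₁ * h) * (c₂ * h ^ p + s * h) :=
      mul_le_mul h1 (hBle.trans (add_le_add h2 le_rfl)) hB0 (mul_nonneg hc₁ hh0.le)
    have e : (c₁ * h) * (c₂ * h ^ p + s * h) = c₁ * c₂ * (h * h ^ p) + c₁ * s * h ^ 2 := by ring
    linarith
  have hAD : A * D ≤ A ^ 2 + A * B := by
    have e := mul_le_mul_of_nonneg_left htri2 hA0
    have e2 : A * (A + B) = A ^ 2 + A * B := by ring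
    linarith
  have hA2 : A ^ 2 ≤ c₁ ^ 2 * h ^ 2 := by
    have e := mul_le_mul h1 h1 hA0 (mul_nonneg hc₁ hh0.le)
    have e2 : (c₁ * h) * (c₁ * h) = c₁ ^ 2 * h ^ 2 := by ring
    have e3 : A * A = A ^ 2 := by ring
    linarith
  have hB2 : B ^ 2 ≤ D ^ 2 + 2 * (A * D) + A ^ 2 := by
    have e := mul_le_mul htri1 htri1 hB0 (add_nonneg hD0 hA0)
    have e2 : (D + A) * (D + A) = D ^ 2 + 2 * (A * D) + A ^ 2 := by ring
    have e3 : B * B = B ^ 2 := by ring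
    linarith
  -- main bounds
  have h5' := abs_le.1 h5
  have hcoef : 0 ≤ 3 * c₁ ^ 2 + 2 * c₁ * s + c₃ + c₄ := by positivity
  have e1 : U ^ 2 - Uh ^ 2 = (U ^ 2 - Ut ^ 2) + Bt ^ 2 := by rw [h4]; ring
  have eBt2 : Bt ^ 2 ≤ B ^ 2 + c₃ * h ^ 2 := by linarith [h3'.2]
  have eB2 : B ^ 2 ≤ D ^ 2 + 3 * (c₁ ^ 2 * h ^ 2)
      + 2 * (c₁ * c₂ * (h * h ^ p) + c₁ * s * h ^ 2) := by
    linarith [hB2, hAD, hAB, hA2]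
  have k1 : (3 * c₁ ^ 2 + 2 * c₁ * s + c₃ + c₄) * h ^ 2
      ≤ (3 * c₁ ^ 2 + 2 * c₁ * s + c₃ + c₄) * h ^ (1 + p) :=
    mul_le_mul_of_nonneg_left hpow hcoef
  have k2 : 2 * c₁ * c₂ * (h * h ^ p) = 2 * c₁ * c₂ * h ^ (1 + p) := by rw [hhp]
  have k3 : c₄ * h ^ 2 ≤ c₄ * h ^ (1 + p) := mul_le_mul_of_nonneg_left hpow hc₄
  have k4 : 0 ≤ (3 * c₁ ^ 2 + 2 * c₁ * c₂ + 2 * c₁ * s + c₃) * h ^ (1 + p) :=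
    mul_nonneg (by positivity) hhp0.le
  rw [abs_le]
  constructor
  · -- lower bound
    linarith [h5'.1, e1, sq_nonneg Bt, sq_nonneg D, k3, k4]
  · -- upper bound
    linarith [h5'.2, e1, eBt2, eB2, k1, k2, sq_nonneg D]
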